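/- Let φ, ψ, σ be L-formulas with n, m, and n+m free variables respectively, and suppose every model of T satisfies ∀x⃗∀y⃗ (σ(x⃗,y⃗) → φ(x⃗) ∧ ψ(y⃗)), ∀x⃗ (φ(x⃗) → ∃y⃗ σ(x⃗,y⃗)), and ∀x⃗∀y⃗∀z⃗ (σ(x⃗,y⃗) ∧ σ(x⃗,z⃗) → y⃗ = z⃗) (σ is a T-provably functional relation from φ to ψ). Then the induced map f_σ : ⟦φ⟧ → ⟦ψ⟧, sending (M, a⃗) to (M, b⃗) for the unique b⃗ with M ⊨ σ(a⃗, b⃗), is continuous; moreover it commutes with the actions: f_σ(θ_φ(f, p)) = θ_ψ(f, f_σ(p)) for every composable pair. -/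

import Mathlib

open FirstOrder FirstOrder.Language Set Topology

universe u v w x

variable {L : FirstOrder.Language.{u, v}} {α : Type w}

/-- A model of `T` whose carrier is a subset of `α`: an element of the set `X_T` of
small models of `T`. -/
structure SmallModel (L : FirstOrder.Language.{u, v}) (α : Type w) (T : L.Theory) where
  carrier : Set α
  struc : L.Structure carrier
  models : @FirstOrder.Language.Theory.Model L carrier struc T

/-- `M.Sat φ v` means that the formula `φ` is realized in the small model `M`
at the valuation `v`. -/
def SmallModel.Sat {T : L.Theory} (M : SmallModel L α T) {ι : Type*}
    (φ : L.Formula ι) (v : ι → M.carrier) : Prop :=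
  letI := M.struc
  φ.Realize v

/-- The basic open set `⟨φ, b⟩ ⊆ X_T`. -/
def XBasic {T : L.Theory} {n : ℕ} (φ : L.Formula (Fin n)) (b : Fin n → α) :
    Set (SmallModel L α T) :=
  {M | ∃ h : ∀ i, b i ∈ M.carrier, M.Sat φ fun i => ⟨b i, h i⟩}

/-- The logical topology on `X_T`, generated by the sets `⟨φ, b⟩`. -/
instance SmallModel.instTopologicalSpace {T : L.Theory} :
    TopologicalSpace (SmallModel L α T) :=
  TopologicalSpace.generateFrom
    {U | ∃ (n : ℕ) (φ : L.Formula (Fin n)) (b : Fin n → α), U = XBasic φ b}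

/-- A point of the sheaf `⟦φ⟧`: a model `M ∈ X_T` together with a tuple from its carrier
realizing `φ`. -/
structure SheafPt {L : FirstOrder.Language.{u, v}} {α : Type w} (T : L.Theory)
    {n : ℕ} (φ : L.Formula (Fin n)) where
  model : SmallModel L α T
  elem : Fin n → model.carrier
  sat : model.Sat φ elem

/-- The basic open set `⟨ψ, b⟩ ⊆ ⟦φ⟧`. -/
def sheafBasic {T : L.Theory} {n : ℕ} (φ : L.Formula (Fin n)) {m : ℕ}
    (ψ : L.Formula (Fin n ⊕ Fin m)) (b : Fin m → α) :
    Set (SheafPt (α := α) T φ) :=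
  {p | ∃ h : ∀ i, b i ∈ p.model.carrier,
        p.model.Sat ψ (Sum.elim p.elem fun i => ⟨b i, h i⟩)}

/-- The logical topology on `⟦φ⟧`, generated by the sets `⟨ψ, b⟩`. -/
instance SheafPt.instTopologicalSpace {T : L.Theory} {n : ℕ} (φ : L.Formula (Fin n)) :
    TopologicalSpace (SheafPt (α := α) T φ) :=
  TopologicalSpace.generateFrom
    {U | ∃ (m : ℕ) (ψ : L.Formula (Fin n ⊕ Fin m)) (b : Fin m → α), U = sheafBasic φ ψ b}

/-- Isomorphisms of `L`-structures between two small models. -/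
abbrev StrEquiv {T : L.Theory} (A B : SmallModel L α T) : Type _ :=
  @FirstOrder.Language.Equiv L A.carrier B.carrier A.struc B.struc

/-- The underlying function of an isomorphism of small models. -/
def StrEquiv.fn {T : L.Theory} {A B : SmallModel L α T} (f : StrEquiv A B) :
    A.carrier → B.carrier :=
  (@FirstOrder.Language.Equiv.toEquiv L A.carrier B.carrier A.struc B.struc f)

/-- Composition of isomorphisms of small models. -/
def StrEquiv.comp {T : L.Theory} {A B C : SmallModel L α T}
    (g : StrEquiv B C) (f : StrEquiv A B) : StrEquiv A C :=
  letI := A.struc; letI := B.struc; letI := C.struc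
  FirstOrder.Language.Equiv.comp g f

/-- An element of `G_T`: a triple `(M, N, f)` with `M, N ∈ X_T` and `f : M ≅ N` an
isomorphism of `L`-structures. -/
structure ModelIso (L : FirstOrder.Language.{u, v}) (α : Type w) (T : L.Theory) where
  src : SmallModel L α T
  tgt : SmallModel L α T
  iso : StrEquiv src tgt

/-- The basic open set `⟨a ↦ b⟩ ⊆ G_T`. -/
def GMapsTo {T : L.Theory} (a b : α) : Set (ModelIso L α T) :=
  {g | ∃ h : a ∈ g.src.carrier, (StrEquiv.fn g.iso ⟨a, h⟩ : α) = b}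

/-- The logical topology on `G_T`, generated by the sets `s⁻¹⟨φ, b⟩`, `t⁻¹⟨φ, b⟩` and
`⟨a ↦ b⟩`. -/
instance ModelIso.instTopologicalSpace {T : L.Theory} :
    TopologicalSpace (ModelIso L α T) :=
  TopologicalSpace.generateFrom
    ({U | ∃ (n : ℕ) (φ : L.Formula (Fin n)) (b : Fin n → α),
        U = ModelIso.src ⁻¹' XBasic φ b} ∪
     {U | ∃ (n : ℕ) (φ : L.Formula (Fin n)) (b : Fin n → α),
        U = ModelIso.tgt ⁻¹' XBasic φ b} ∪
     {U | ∃ a b : α, U = GMapsTo (T := T) a b})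

/-- The identity arrow of `G_T` at a model `M`. -/
def ModelIso.idIso {T : L.Theory} (M : SmallModel L α T) : ModelIso L α T :=
  ⟨M, M, letI := M.struc; FirstOrder.Language.Equiv.refl L M.carrier⟩

/-- The inverse of an arrow of `G_T`. -/
def ModelIso.invIso {T : L.Theory} (g : ModelIso L α T) : ModelIso L α T :=
  ⟨g.tgt, g.src, letI := g.src.struc; letI := g.tgt.struc;
    FirstOrder.Language.Equiv.symm g.iso⟩

/-- An element of `G_T ×_{X_T} ⟦φ⟧`: an arrow `(M,N,f)` of `G_T` together with a point
`(M, a⃗)` of `⟦φ⟧` lying over its source. -/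
structure ActionPt {L : FirstOrder.Language.{u, v}} {α : Type w} (T : L.Theory)
    {n : ℕ} (φ : L.Formula (Fin n)) where
  g : ModelIso L α T
  elem : Fin n → g.src.carrier
  sat : g.src.Sat φ elem

/-- The point of `⟦φ⟧` over the source of the arrow. -/
def ActionPt.pt {T : L.Theory} {n : ℕ} {φ : L.Formula (Fin n)}
    (q : ActionPt (α := α) T φ) : SheafPt (α := α) T φ :=
  ⟨q.g.src, q.elem, q.sat⟩

/-- `G_T ×_{X_T} ⟦φ⟧` is topologized as a subspace of the product `G_T × ⟦φ⟧`. -/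
instance ActionPt.instTopologicalSpace {T : L.Theory} {n : ℕ} {φ : L.Formula (Fin n)} :
    TopologicalSpace (ActionPt (α := α) T φ) :=
  TopologicalSpace.induced (fun q => (q.g, q.pt)) inferInstance

/-- The action `θ_φ : G_T ×_{X_T} ⟦φ⟧ → ⟦φ⟧`, `θ_φ((M,N,f), (M, a⃗)) = (N, f(a⃗))`. -/
def theta {T : L.Theory} {n : ℕ} (φ : L.Formula (Fin n))
    (q : ActionPt (α := α) T φ) : SheafPt (α := α) T φ where
  model := q.g.tgt
  elem := fun i => StrEquiv.fn q.g.iso (q.elem i)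
  sat := by
    letI := q.g.src.struc
    letI := q.g.tgt.struc
    have h := q.sat
    have heq : (fun i => StrEquiv.fn q.g.iso (q.elem i)) = ⇑q.g.iso ∘ q.elem := rfl
    show Formula.Realize (M := q.g.tgt.carrier) φ _
    rw [heq]
    exact (StrongHomClass.realize_formula q.g.iso φ).mpr h

section aux

variable {T : L.Theory}

/-- The structure on the carrier of a small model, as an instance. -/
instance SmallModel.instStructureCarrier (M : SmallModel L α T) :
    L.Structure M.carrier := M.struc

instance SmallModel.instModelCarrier (M : SmallModel L α T) :
    M.carrier ⊨ T := M.models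

lemma SmallModel.sat_iff (M : SmallModel L α T) {ι : Type*} (θ : L.Formula ι)
    (v : ι → M.carrier) : M.Sat θ v ↔ θ.Realize v := Iff.rfl

/-- A universe-lifted copy of the carrier of a small model. -/
def SmallModel.Big (M : SmallModel L α T) : Type (max u v w) :=
  ULift.{max u v} M.carrier

instance SmallModel.instStructureBig (M : SmallModel L α T) :
    L.Structure M.Big :=
  (Equiv.ulift.symm : M.carrier ≃ ULift.{max u v} M.carrier).inducedStructure

/-- The equivalence between the carrier of a small model and its lift. -/
def SmallModel.bigEquiv (M : SmallModel L α T) : M.carrier ≃[L] M.Big :=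
  Equiv.inducedStructureEquiv _

instance SmallModel.instModelBig (M : SmallModel L α T) : M.Big ⊨ T :=
  StrongHomClass.theory_model M.bigEquiv

lemma SmallModel.sat_iff_big (M : SmallModel L α T) {ι : Type*} (θ : L.Formula ι)
    (v : ι → M.carrier) : θ.Realize (⇑M.bigEquiv ∘ v) ↔ M.Sat θ v :=
  StrongHomClass.realize_formula M.bigEquiv θ

lemma StrEquiv.sat_comp {A B : SmallModel L α T} (f : StrEquiv A B) {ι : Type*}
    (θ : L.Formula ι) (v : ι → A.carrier) :
    B.Sat θ (fun i => f.fn (v i)) ↔ A.Sat θ v :=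
  StrongHomClass.realize_formula (f : A.carrier ≃[L] B.carrier) θ

lemma SheafPt.ext' {n : ℕ} {φ : L.Formula (Fin n)} {p q : SheafPt (α := α) T φ}
    (hm : p.model = q.model) (he : ∀ i, (p.elem i : α) = (q.elem i : α)) : p = q := by
  obtain ⟨M₁, e₁, s₁⟩ := p
  obtain ⟨M₂, e₂, s₂⟩ := q
  cases hm
  obtain rfl : e₁ = e₂ := funext fun i => Subtype.ext (he i)
  rfl

end aux

/-- **A `T`-provably functional relation `σ` from `φ` to `ψ` induces a continuous,
equivariant map `f_σ : ⟦φ⟧ → ⟦ψ⟧`**, sending `(M, a⃗)` to `(M, b⃗)` for the unique `b⃗`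
with `M ⊨ σ(a⃗, b⃗)`. -/
theorem functional_relation_induces_continuous_equivariant_map
    {T : L.Theory} {n m : ℕ} (φ : L.Formula (Fin n)) (ψ : L.Formula (Fin m))
    (σ : L.Formula (Fin n ⊕ Fin m))
    (h1 : ∀ (M : Type (max u v w)) [L.Structure M] [@FirstOrder.Language.Theory.Model L M
        inferInstance T] (vM : Fin n → M) (wM : Fin m → M),
      σ.Realize (Sum.elim vM wM) → φ.Realize vM ∧ ψ.Realize wM)
    (h2 : ∀ (M : Type (max u v w)) [L.Structure M] [@FirstOrder.Language.Theory.Model L M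
        inferInstance T] (vM : Fin n → M),
      φ.Realize vM → ∃ wM : Fin m → M, σ.Realize (Sum.elim vM wM))
    (h3 : ∀ (M : Type (max u v w)) [L.Structure M] [@FirstOrder.Language.Theory.Model L M
        inferInstance T] (vM : Fin n → M) (wM wM' : Fin m → M),
      σ.Realize (Sum.elim vM wM) → σ.Realize (Sum.elim vM wM') → wM = wM')
    (F : SheafPt (α := α) T φ → SheafPt (α := α) T ψ)
    (hF : ∀ p : SheafPt (α := α) T φ, (F p).model = p.model ∧
      ∃ hmem : ∀ i, ((F p).elem i : α) ∈ p.model.carrier,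
        p.model.Sat σ (Sum.elim p.elem fun i => ⟨((F p).elem i : α), hmem i⟩)) :
    Continuous F ∧
      ∀ (q : ActionPt (α := α) T φ) (q' : ActionPt (α := α) T ψ),
        q'.g = q.g → q'.pt = F q.pt → F (theta φ q) = theta ψ q' := by
  classical
  have h3' : ∀ (M : SmallModel L α T) (v : Fin n → M.carrier) (w w' : Fin m → M.carrier),
      M.Sat σ (Sum.elim v w) → M.Sat σ (Sum.elim v w') → w = w' := by
    intro M v w w' hw hw'
    have hww : ⇑M.bigEquiv ∘ w = ⇑M.bigEquiv ∘ w' := by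
      apply h3 M.Big (⇑M.bigEquiv ∘ v)
      · rw [← Sum.comp_elim]; exact (M.sat_iff_big σ _).mpr hw
      · rw [← Sum.comp_elim]; exact (M.sat_iff_big σ _).mpr hw'
    funext i
    exact M.bigEquiv.toEquiv.injective (congrFun hww i)
  constructor
  · -- continuity
    rw [continuous_generateFrom_iff]
    rintro U ⟨k, ψ', b, rfl⟩
    set g1 : Fin n ⊕ Fin m → (Fin n ⊕ Fin k) ⊕ Fin m :=
      Sum.elim (fun i => Sum.inl (Sum.inl i)) Sum.inr with hg1
    set g2 : Fin m ⊕ Fin k → (Fin n ⊕ Fin k) ⊕ Fin m :=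
      Sum.elim Sum.inr (fun j => Sum.inl (Sum.inr j)) with hg2
    set χ : L.Formula (Fin n ⊕ Fin k) :=
      Formula.iExs (Fin m) ((σ.relabel g1) ⊓ (ψ'.relabel g2))
      with hχdef
    have hχ : ∀ (M : SmallModel L α T) (v : Fin n → M.carrier) (u : Fin k → M.carrier),
        M.Sat χ (Sum.elim v u) ↔
          ∃ w : Fin m → M.carrier, M.Sat σ (Sum.elim v w) ∧ M.Sat ψ' (Sum.elim w u) := by
      intro M v u
      rw [SmallModel.sat_iff, hχdef, Formula.realize_iExs]
      apply exists_congr; intro w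
      rw [Formula.realize_inf, Formula.realize_relabel, Formula.realize_relabel]
      rw [show (Sum.elim (Sum.elim v u) w) ∘ g1 = Sum.elim v w from
          funext fun x => by rcases x with i | i <;> rfl]
      rw [show (Sum.elim (Sum.elim v u) w) ∘ g2 = Sum.elim w u from
          funext fun x => by rcases x with i | i <;> rfl]
      rfl
    have hopen : F ⁻¹' sheafBasic ψ ψ' b = sheafBasic φ χ b := by
      ext p
      have hmF := (hF p).1
      have hex := (hF p).2
      simp only [Set.mem_preimage]
      set r := F p with hr
      clear_value r
      clear hr
      obtain ⟨Mr, er, sr⟩ := r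
      dsimp only at hmF hex
      subst hmF
      obtain ⟨hmem, hσ'⟩ := hex
      have hσ : p.model.Sat σ (Sum.elim p.elem er) := hσ'
      constructor
      · rintro ⟨hb, hs⟩
        exact ⟨hb, (hχ p.model p.elem _).mpr ⟨er, hσ, hs⟩⟩
      · rintro ⟨hb, hs⟩
        obtain ⟨w, hw1, hw2⟩ := (hχ p.model p.elem _).mp hs
        obtain rfl : w = er := h3' p.model p.elem w er hw1 hσ
        exact ⟨hb, hw2⟩
    rw [hopen]
    exact TopologicalSpace.isOpen_generateFrom_of_mem ⟨k, χ, b, rfl⟩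
  · -- equivariance
    rintro q ⟨g', e', s'⟩ hg hpt
    dsimp only at hg
    subst hg
    have hex := (hF q.pt).2
    rw [← hpt] at hex
    obtain ⟨hmem, hσ⟩ := hex
    have hσM : q.g.src.Sat σ (Sum.elim q.elem e') := hσ
    have hσN : q.g.tgt.Sat σ (Sum.elim (fun i => q.g.iso.fn (q.elem i))
        (fun i => q.g.iso.fn (e' i))) := by
      have h0 := (StrEquiv.sat_comp q.g.iso σ (Sum.elim q.elem e')).mpr hσM
      rw [show (Sum.elim (fun i => q.g.iso.fn (q.elem i)) (fun i => q.g.iso.fn (e' i))) =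
          fun x => q.g.iso.fn (Sum.elim q.elem e' x) from
          funext fun x => by rcases x with i | i <;> rfl]
      exact h0
    obtain ⟨hm2, hmem2, hσ2⟩ := hF (theta φ q)
    have hσ2' : q.g.tgt.Sat σ (Sum.elim (fun i => q.g.iso.fn (q.elem i))
        (fun i => (⟨((F (theta φ q)).elem i : α), hmem2 i⟩ : q.g.tgt.carrier))) := hσ2
    have hc : (fun i => (⟨((F (theta φ q)).elem i : α), hmem2 i⟩ : q.g.tgt.carrier)) =
        fun i => q.g.iso.fn (e' i) :=
      h3' q.g.tgt _ _ _ hσ2' hσN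
    apply SheafPt.ext'
    · exact hm2
    · intro i
      have h4 : ((⟨((F (theta φ q)).elem i : α), hmem2 i⟩ : q.g.tgt.carrier) : α) =
          (q.g.iso.fn (e' i) : α) := congrArg _ (congrFun hc i)
      exact h4
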